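/- Let ξ ∈ ℝ, ξ ≠ 0, and let V : ℝ → ℝ be continuous. Suppose f₊, f₋ : ℝ → ℂ are twice continuously differentiable solutions of −f'' + V·f = ξ²·f on ℝ, with the asymptotics f₊(x)e^{−iξx} → 1 and f₊'(x)e^{−iξx} → iξ as x → +∞, and f₋(x)e^{iξx} → 1 and f₋'(x)e^{iξx} → −iξ as x → −∞. Suppose there exist T₊, T₋ ∈ ℂ ∖ {0} and R₊, R₋ ∈ ℂ such that f₊ = (1/T₊)·conj(f₋) + (R₋/T₊)·f₋ and f₋ = (1/T₋)·conj(f₊) + (R₊/T₋)·f₊ on ℝ. Then T₊ = T₋ =: T, and |T|² + |R₊|² = 1, |T|² + |R₋|² = 1, and T·conj(R₋) + R₊·conj(T) = 0; equivalently, the 2×2 matrix S = [[T, R₊],[R₋, T]] is unitary. -/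

import Mathlib

open Filter

private lemma star_diff {f : ℝ → ℂ} (hf : Differentiable ℝ f) :
    Differentiable ℝ (fun x => (starRingEnd ℂ) (f x)) := by
  intro x
  simp only [starRingEnd_apply]
  exact ((hf x).hasDerivAt.star).differentiableAt

private lemma star_deriv {f : ℝ → ℂ} (hf : Differentiable ℝ f) :
    deriv (fun x => (starRingEnd ℂ) (f x)) = fun x => (starRingEnd ℂ) (deriv f x) := by
  funext x
  simp only [starRingEnd_apply]
  exact ((hf x).hasDerivAt.star).deriv

private lemma wron_const (ξ : ℝ) (V : ℝ → ℝ) (f g : ℝ → ℂ)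
    (hf : Differentiable ℝ f) (hf' : Differentiable ℝ (deriv f))
    (hg : Differentiable ℝ g) (hg' : Differentiable ℝ (deriv g))
    (heqf : ∀ x, -deriv (deriv f) x + (V x : ℂ) * f x = (ξ : ℂ) ^ 2 * f x)
    (heqg : ∀ x, -deriv (deriv g) x + (V x : ℂ) * g x = (ξ : ℂ) ^ 2 * g x)
    (x y : ℝ) :
    f x * deriv g x - deriv f x * g x = f y * deriv g y - deriv f y * g y := by
  have h : ∀ z : ℝ, HasDerivAt (fun t => f t * deriv g t - deriv f t * g t) 0 z := by
    intro z
    have e1 : deriv (deriv f) z = (V z : ℂ) * f z - (ξ : ℂ) ^ 2 * f z := by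
      linear_combination - heqf z
    have e2 : deriv (deriv g) z = (V z : ℂ) * g z - (ξ : ℂ) ^ 2 * g z := by
      linear_combination - heqg z
    have H := ((hf z).hasDerivAt.mul (hg' z).hasDerivAt).sub
      ((hf' z).hasDerivAt.mul (hg z).hasDerivAt)
    exact H.congr_deriv (by rw [e1, e2]; ring)
  exact is_const_of_deriv_eq_zero (fun z => (h z).differentiableAt)
    (fun z => (h z).deriv) x y

theorem scattering_matrix_unitary
    (ξ : ℝ) (hξ : ξ ≠ 0) (V : ℝ → ℝ) (hV : Continuous V)
    (fp fm : ℝ → ℂ) (hfp : ContDiff ℝ 2 fp) (hfm : ContDiff ℝ 2 fm)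
    (heqp : ∀ x : ℝ, -deriv (deriv fp) x + (V x : ℂ) * fp x = (ξ : ℂ) ^ 2 * fp x)
    (heqm : ∀ x : ℝ, -deriv (deriv fm) x + (V x : ℂ) * fm x = (ξ : ℂ) ^ 2 * fm x)
    (hp0 : Tendsto (fun x : ℝ => fp x * Complex.exp (-(Complex.I * ξ * x)))
      atTop (nhds 1))
    (hp1 : Tendsto (fun x : ℝ => deriv fp x * Complex.exp (-(Complex.I * ξ * x)))
      atTop (nhds (Complex.I * ξ)))
    (hm0 : Tendsto (fun x : ℝ => fm x * Complex.exp (Complex.I * ξ * x))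
      atBot (nhds 1))
    (hm1 : Tendsto (fun x : ℝ => deriv fm x * Complex.exp (Complex.I * ξ * x))
      atBot (nhds (-(Complex.I * ξ))))
    (Tp Tm Rp Rm : ℂ) (hTp : Tp ≠ 0) (hTm : Tm ≠ 0)
    (hconnp : ∀ x : ℝ,
      fp x = (1 / Tp) * (starRingEnd ℂ) (fm x) + (Rm / Tp) * fm x)
    (hconnm : ∀ x : ℝ,
      fm x = (1 / Tm) * (starRingEnd ℂ) (fp x) + (Rp / Tm) * fp x) :
    Tp = Tm ∧
    ‖Tp‖ ^ 2 + ‖Rp‖ ^ 2 = 1 ∧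
    ‖Tp‖ ^ 2 + ‖Rm‖ ^ 2 = 1 ∧
    Tp * (starRingEnd ℂ) Rm + Rp * (starRingEnd ℂ) Tp = 0 ∧
    !![Tp, Rp; Rm, Tp] ∈ Matrix.unitaryGroup (Fin 2) ℂ := by
  have h2 : (2 : WithTop ℕ∞) = 1 + 1 := by norm_num
  have hfp1 : Differentiable ℝ fp := hfp.differentiable two_ne_zero
  have hfm1 : Differentiable ℝ fm := hfm.differentiable two_ne_zero
  have hfp2 : Differentiable ℝ (deriv fp) :=
    ((contDiff_succ_iff_deriv.mp (h2 ▸ hfp)).2.2).differentiable one_ne_zero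
  have hfm2 : Differentiable ℝ (deriv fm) :=
    ((contDiff_succ_iff_deriv.mp (h2 ▸ hfm)).2.2).differentiable one_ne_zero
  -- conjugate solutions
  have heqcp : ∀ x : ℝ, -deriv (deriv (fun y => (starRingEnd ℂ) (fp y))) x + (V x : ℂ) * (starRingEnd ℂ) (fp x)
      = (ξ : ℂ) ^ 2 * (starRingEnd ℂ) (fp x) := by
    intro x
    rw [star_deriv hfp1, star_deriv hfp2]
    have := congrArg (starRingEnd ℂ) (heqp x)
    simpa [map_add, map_neg, map_mul, map_pow, Complex.conj_ofReal] using this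
  have heqcm : ∀ x : ℝ, -deriv (deriv (fun y => (starRingEnd ℂ) (fm y))) x + (V x : ℂ) * (starRingEnd ℂ) (fm x)
      = (ξ : ℂ) ^ 2 * (starRingEnd ℂ) (fm x) := by
    intro x
    rw [star_deriv hfm1, star_deriv hfm2]
    have := congrArg (starRingEnd ℂ) (heqm x)
    simpa [map_add, map_neg, map_mul, map_pow, Complex.conj_ofReal] using this
  -- the Wronskian of fp with its conjugate: constant, equal to its limit -2iξ
  have hA : ∀ x : ℝ, fp x * (starRingEnd ℂ) (deriv fp x) - deriv fp x * (starRingEnd ℂ) (fp x)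
      = -(2 * Complex.I * ξ) := by
    intro x
    have hconst : ∀ y : ℝ, fp y * (starRingEnd ℂ) (deriv fp y) - deriv fp y * (starRingEnd ℂ) (fp y)
        = fp x * (starRingEnd ℂ) (deriv fp x) - deriv fp x * (starRingEnd ℂ) (fp x) := by
      intro y
      have := wron_const ξ V fp (fun t => (starRingEnd ℂ) (fp t)) hfp1 hfp2 (star_diff hfp1)
        (by rw [star_deriv hfp1]; exact star_diff hfp2) heqp heqcp y x
      rwa [star_deriv hfp1] at this
    have hlim : Tendsto (fun y : ℝ => fp y * (starRingEnd ℂ) (deriv fp y) - deriv fp y * (starRingEnd ℂ) (fp y))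
        atTop (nhds (1 * (starRingEnd ℂ) (Complex.I * ξ) - (Complex.I * ξ) * (starRingEnd ℂ) 1)) := by
      have H := (hp0.mul hp1.star).sub (hp1.mul hp0.star)
      apply H.congr
      intro y
      have hEE : Complex.exp (-(Complex.I*ξ*y)) * (starRingEnd ℂ) (Complex.exp (-(Complex.I*ξ*y))) = 1 := by
        rw [← Complex.exp_conj, ← Complex.exp_add]
        have : (-(Complex.I*(ξ:ℂ)*(y:ℂ))) + (starRingEnd ℂ) (-(Complex.I*ξ*y)) = 0 := by
          simp only [map_neg, map_mul, Complex.conj_I, Complex.conj_ofReal]; ring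
        rw [this, Complex.exp_zero]
      simp only [starRingEnd_apply] at hEE ⊢
      push_cast
      calc fp y * Complex.exp (-(Complex.I*ξ*y)) * star (deriv fp y * Complex.exp (-(Complex.I*ξ*y)))
            - deriv fp y * Complex.exp (-(Complex.I*ξ*y)) * star (fp y * Complex.exp (-(Complex.I*ξ*y)))
          = (fp y * star (deriv fp y) - deriv fp y * star (fp y))
            * (Complex.exp (-(Complex.I*ξ*y)) * star (Complex.exp (-(Complex.I*ξ*y)))) := by
            simp only [star_mul']; ring
        _ = fp y * star (deriv fp y) - deriv fp y * star (fp y) := by rw [hEE, mul_one]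
    have := tendsto_nhds_unique (tendsto_const_nhds.congr fun y => (hconst y).symm) hlim
    rw [this]
    simp only [one_mul, map_one, mul_one, map_mul, Complex.conj_I, Complex.conj_ofReal]
    ring
  -- the Wronskian of fm with its conjugate: constant, equal to its limit 2iξ
  have hB : ∀ x : ℝ, fm x * (starRingEnd ℂ) (deriv fm x) - deriv fm x * (starRingEnd ℂ) (fm x)
      = 2 * Complex.I * ξ := by
    intro x
    have hconst : ∀ y : ℝ, fm y * (starRingEnd ℂ) (deriv fm y) - deriv fm y * (starRingEnd ℂ) (fm y)
        = fm x * (starRingEnd ℂ) (deriv fm x) - deriv fm x * (starRingEnd ℂ) (fm x) := by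
      intro y
      have := wron_const ξ V fm (fun t => (starRingEnd ℂ) (fm t)) hfm1 hfm2 (star_diff hfm1)
        (by rw [star_deriv hfm1]; exact star_diff hfm2) heqm heqcm y x
      rwa [star_deriv hfm1] at this
    have hlim : Tendsto (fun y : ℝ => fm y * (starRingEnd ℂ) (deriv fm y) - deriv fm y * (starRingEnd ℂ) (fm y))
        atBot (nhds (1 * (starRingEnd ℂ) (-(Complex.I * ξ)) - (-(Complex.I * ξ)) * (starRingEnd ℂ) 1)) := by
      have H := (hm0.mul hm1.star).sub (hm1.mul hm0.star)
      apply H.congr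
      intro y
      have hEE : Complex.exp (Complex.I*ξ*y) * (starRingEnd ℂ) (Complex.exp (Complex.I*ξ*y)) = 1 := by
        rw [← Complex.exp_conj, ← Complex.exp_add]
        have : (Complex.I*(ξ:ℂ)*(y:ℂ)) + (starRingEnd ℂ) (Complex.I*ξ*y) = 0 := by
          simp only [map_mul, Complex.conj_I, Complex.conj_ofReal]; ring
        rw [this, Complex.exp_zero]
      simp only [starRingEnd_apply] at hEE ⊢
      calc fm y * Complex.exp (Complex.I*ξ*y) * star (deriv fm y * Complex.exp (Complex.I*ξ*y))
            - deriv fm y * Complex.exp (Complex.I*ξ*y) * star (fm y * Complex.exp (Complex.I*ξ*y))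
          = (fm y * star (deriv fm y) - deriv fm y * star (fm y))
            * (Complex.exp (Complex.I*ξ*y) * star (Complex.exp (Complex.I*ξ*y))) := by
            simp only [star_mul']; ring
        _ = fm y * star (deriv fm y) - deriv fm y * star (fm y) := by rw [hEE, mul_one]
    have := tendsto_nhds_unique (tendsto_const_nhds.congr fun y => (hconst y).symm) hlim
    rw [this]
    simp only [one_mul, map_one, mul_one, map_neg, map_mul, Complex.conj_I,
      Complex.conj_ofReal]
    ring
  -- derivatives of the connection formulas
  have hdconnp : ∀ x : ℝ, deriv fp x = (1/Tp) * (starRingEnd ℂ) (deriv fm x) + (Rm/Tp) * deriv fm x := by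
    intro x
    have hfun : fp = fun y => (1/Tp) * (starRingEnd ℂ) (fm y) + (Rm/Tp) * fm y := funext hconnp
    have h1 : HasDerivAt (fun y => (1/Tp) * (starRingEnd ℂ) (fm y) + (Rm/Tp) * fm y)
        ((1/Tp) * (starRingEnd ℂ) (deriv fm x) + (Rm/Tp) * deriv fm x) x := by
      simp only [starRingEnd_apply]
      exact (((hfm1 x).hasDerivAt.star).const_mul (1/Tp)).add
        (((hfm1 x).hasDerivAt).const_mul (Rm/Tp))
    rw [hfun]; exact h1.deriv
  have hdconnm : ∀ x : ℝ, deriv fm x = (1/Tm) * (starRingEnd ℂ) (deriv fp x) + (Rp/Tm) * deriv fp x := by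
    intro x
    have hfun : fm = fun y => (1/Tm) * (starRingEnd ℂ) (fp y) + (Rp/Tm) * fp y := funext hconnm
    have h1 : HasDerivAt (fun y => (1/Tm) * (starRingEnd ℂ) (fp y) + (Rp/Tm) * fp y)
        ((1/Tm) * (starRingEnd ℂ) (deriv fp x) + (Rp/Tm) * deriv fp x) x := by
      simp only [starRingEnd_apply]
      exact (((hfp1 x).hasDerivAt.star).const_mul (1/Tm)).add
        (((hfp1 x).hasDerivAt).const_mul (Rp/Tm))
    rw [hfun]; exact h1.deriv
  -- abbreviations at x = 0
  set u := fp 0 with hu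
  set u' := deriv fp 0 with hu'
  set v := fm 0 with hv
  set v' := deriv fm 0 with hv'
  have e1 : u = (1/Tp) * (starRingEnd ℂ) v + (Rm/Tp) * v := hconnp 0
  have e2 : u' = (1/Tp) * (starRingEnd ℂ) v' + (Rm/Tp) * v' := hdconnp 0
  have e3 : v = (1/Tm) * (starRingEnd ℂ) u + (Rp/Tm) * u := hconnm 0
  have e4 : v' = (1/Tm) * (starRingEnd ℂ) u' + (Rp/Tm) * u' := hdconnm 0
  have e5 : u * (starRingEnd ℂ) u' - u' * (starRingEnd ℂ) u = -(2 * Complex.I * ξ) := hA 0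
  have e6 : v * (starRingEnd ℂ) v' - v' * (starRingEnd ℂ) v = 2 * Complex.I * ξ := hB 0
  have ce1 : (starRingEnd ℂ) u = (starRingEnd ℂ) (1/Tp) * v + (starRingEnd ℂ) (Rm/Tp) * (starRingEnd ℂ) v := by
    have := congrArg (starRingEnd ℂ) e1; simpa [map_add, map_mul] using this
  have ce2 : (starRingEnd ℂ) u' = (starRingEnd ℂ) (1/Tp) * v' + (starRingEnd ℂ) (Rm/Tp) * (starRingEnd ℂ) v' := by
    have := congrArg (starRingEnd ℂ) e2; simpa [map_add, map_mul] using this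
  have ce3 : (starRingEnd ℂ) v = (starRingEnd ℂ) (1/Tm) * u + (starRingEnd ℂ) (Rp/Tm) * (starRingEnd ℂ) u := by
    have := congrArg (starRingEnd ℂ) e3; simpa [map_add, map_mul] using this
  have ce4 : (starRingEnd ℂ) v' = (starRingEnd ℂ) (1/Tm) * u' + (starRingEnd ℂ) (Rp/Tm) * (starRingEnd ℂ) u' := by
    have := congrArg (starRingEnd ℂ) e4; simpa [map_add, map_mul] using this
  have ce5 : (starRingEnd ℂ) u * u' - (starRingEnd ℂ) u' * u = 2 * Complex.I * ξ := by
    have := congrArg (starRingEnd ℂ) e5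
    simp only [map_sub, map_mul, map_neg, Complex.conj_I, Complex.conj_ofReal,
      RingHomCompTriple.comp_apply, RingHom.id_apply, Complex.conj_conj, RingHom.id_apply, RingHomCompTriple.comp_apply, map_ofNat] at this
    linear_combination this
  have ce6 : (starRingEnd ℂ) v * v' - (starRingEnd ℂ) v' * v = -(2 * Complex.I * ξ) := by
    have := congrArg (starRingEnd ℂ) e6
    simp only [map_sub, map_mul, Complex.conj_I, Complex.conj_ofReal,
      Complex.conj_conj, RingHom.id_apply, RingHomCompTriple.comp_apply, map_ofNat] at this
    linear_combination this
  have hk : (2 : ℂ) * Complex.I * ξ ≠ 0 :=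
    mul_ne_zero (mul_ne_zero two_ne_zero Complex.I_ne_zero) (by exact_mod_cast hξ)
  -- Tp = Tm
  have h1 : u * v' - u' * v = (1/Tm) * (-(2 * Complex.I * ξ)) := by
    linear_combination u * e4 - u' * e3 + (1/Tm) * e5
  have h2 : u * v' - u' * v = (1/Tp) * (-(2 * Complex.I * ξ)) := by
    linear_combination v' * e1 - v * e2 + (1/Tp) * ce6
  have hTT : Tp = Tm := by
    have h := h1.symm.trans h2
    have h' : (1/Tm) = 1/Tp := mul_right_cancel₀ (neg_ne_zero.mpr hk) h
    rw [one_div, one_div, inv_inj] at h'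
    exact h'.symm
  -- |Tp|^2 + |Rm|^2 = 1  (complex form)
  have K1 : Tp * (starRingEnd ℂ) Tp + Rm * (starRingEnd ℂ) Rm = 1 := by
    have hmain : ((1/Tp) * (starRingEnd ℂ) (1/Tp) - (Rm/Tp) * (starRingEnd ℂ) (Rm/Tp))
        * (2 * Complex.I * ξ) = 1 * (2 * Complex.I * ξ) := by
      linear_combination -e5 + (starRingEnd ℂ) u' * e1 - (starRingEnd ℂ) u * e2
        + ((1/Tp) * (starRingEnd ℂ) v + (Rm/Tp) * v) * ce2
        - ((1/Tp) * (starRingEnd ℂ) v' + (Rm/Tp) * v') * ce1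
        - ((1/Tp) * (starRingEnd ℂ) (1/Tp) - (Rm/Tp) * (starRingEnd ℂ) (Rm/Tp)) * e6
    have h := mul_right_cancel₀ hk hmain
    have hcT : (starRingEnd ℂ) Tp ≠ 0 := by simpa using hTp
    rw [map_div₀, map_div₀, map_one] at h
    field_simp at h
    linear_combination -h
  -- cross relation: Tp * (starRingEnd ℂ) Rm + Rp * (starRingEnd ℂ) Tp = 0
  have K2 : Tp * (starRingEnd ℂ) Rm + Rp * (starRingEnd ℂ) Tp = 0 := by
    have hD1 : u * (starRingEnd ℂ) v' - u' * (starRingEnd ℂ) v = (Rm/Tp) * (2 * Complex.I * ξ) := by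
      linear_combination (starRingEnd ℂ) v' * e1 - (starRingEnd ℂ) v * e2 + (Rm/Tp) * e6
    have hD2 : u * (starRingEnd ℂ) v' - u' * (starRingEnd ℂ) v = (starRingEnd ℂ) (Rp/Tm) * (-(2 * Complex.I * ξ)) := by
      linear_combination u * ce4 - u' * ce3 + (starRingEnd ℂ) (Rp/Tm) * e5
    have h := mul_right_cancel₀ hk (by linear_combination hD1.symm.trans hD2 :
      (Rm/Tp) * (2 * Complex.I * ξ) = (- (starRingEnd ℂ) (Rp/Tm)) * (2 * Complex.I * ξ))
    rw [map_div₀] at h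
    have hcT : (starRingEnd ℂ) Tp ≠ 0 := by simpa using hTp
    have hcTm : (starRingEnd ℂ) Tm ≠ 0 := by simpa using hTm
    rw [← hTT] at h
    field_simp at h
    have h2 := congrArg (starRingEnd ℂ) h
    simp only [map_mul, map_neg, Complex.conj_conj, RingHom.id_apply,
      RingHomCompTriple.comp_apply] at h2
    linear_combination h2
  -- |Rp| = |Rm| (complex form)
  have K3 : Rp * (starRingEnd ℂ) Rp = Rm * (starRingEnd ℂ) Rm := by
    have hcT : (starRingEnd ℂ) Tp ≠ 0 := by simpa using hTp
    have h : (Tp * (starRingEnd ℂ) Rm) * ((starRingEnd ℂ) Tp * Rm) = (Rp * (starRingEnd ℂ) Tp) * ((starRingEnd ℂ) Rp * Tp) := by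
      have h' : Tp * (starRingEnd ℂ) Rm = -(Rp * (starRingEnd ℂ) Tp) := by linear_combination K2
      have h'' : (starRingEnd ℂ) Tp * Rm = -((starRingEnd ℂ) Rp * Tp) := by
        have := congrArg (starRingEnd ℂ) h'
        simp only [map_mul, map_neg, Complex.conj_conj, RingHom.id_apply,
          RingHomCompTriple.comp_apply] at this
        linear_combination this
      rw [h', h'']; ring
    have := mul_left_cancel₀ (mul_ne_zero hTp hcT) (by linear_combination h :
      (Tp * (starRingEnd ℂ) Tp) * (Rm * (starRingEnd ℂ) Rm) = (Tp * (starRingEnd ℂ) Tp) * (Rp * (starRingEnd ℂ) Rp))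
    linear_combination this.symm
  have K4 : Tp * (starRingEnd ℂ) Tp + Rp * (starRingEnd ℂ) Rp = 1 := by rw [K3]; exact K1
  -- convert complex identities to real abs statements
  have habs : ∀ z : ℂ, z * (starRingEnd ℂ) z = ((‖z‖ ^ 2 : ℝ) : ℂ) := by
    intro z
    rw [Complex.mul_conj, Complex.sq_norm]
  have G2 : ‖Tp‖ ^ 2 + ‖Rp‖ ^ 2 = 1 := by
    have := K4
    rw [habs Tp, habs Rp, ← Complex.ofReal_add] at this
    exact_mod_cast this
  have G3 : ‖Tp‖ ^ 2 + ‖Rm‖ ^ 2 = 1 := by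
    have := K1
    rw [habs Tp, habs Rm, ← Complex.ofReal_add] at this
    exact_mod_cast this
  refine ⟨hTT, G2, G3, K2, ?_⟩
  rw [Matrix.mem_unitaryGroup_iff]
  ext i j
  fin_cases i <;> fin_cases j <;>
    simp [Matrix.mul_apply, Fin.sum_univ_two, Matrix.one_apply, Matrix.star_apply,
      Complex.star_def]
  · linear_combination K4
  · linear_combination K2
  · have hc := congrArg (starRingEnd ℂ) K2
    simp only [map_add, map_mul, map_zero, Complex.conj_conj, RingHom.id_apply,
      RingHomCompTriple.comp_apply] at hc
    linear_combination hc
  · linear_combination K1
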